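/- Let p be an odd prime, A' = {−(p−1)/2, …, (p−1)/2} ⊆ Z/p²Z the balanced digit set, k ≥ 1, and n'_k(x) the number of ordered k-tuples of elements of A' summing to x in Z/p²Z. Then n'_k, viewed as a function on the integer representatives in (−p²/2, p²/2), is a non-increasing function of |x| (i.e., if |x| ≤ |y| ≤ (p²−1)/2 then n'_k(x) ≥ n'_k(y)). -/

import Mathlib

open Finset

private noncomputable def digs (p : ℕ) : Finset ℤ := Finset.Icc (-(((p:ℤ)-1)/2)) (((p:ℤ)-1)/2)

private def Good (p : ℕ) (g : ZMod (p^2) → ℕ) : Prop :=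
  ∀ x y : ℤ, |x| ≤ |y| → |y| ≤ ((p : ℤ) ^ 2 - 1) / 2 →
    g ((y : ZMod (p ^ 2))) ≤ g ((x : ZMod (p ^ 2)))

private lemma odd_facts (p : ℕ) [NeZero p] (hodd : Odd p) :
    0 ≤ (((p:ℤ)-1)/2) ∧ 2 * (((p:ℤ)-1)/2) + 1 = (p:ℤ) ∧
    2 * (((p:ℤ)^2-1)/2) + 1 = (p:ℤ)^2 ∧ (((p:ℤ)-1)/2) ≤ (((p:ℤ)^2-1)/2) := by
  obtain ⟨t, ht⟩ := hodd
  have hpz : (p:ℤ) = 2*(t:ℤ)+1 := by exact_mod_cast ht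
  obtain ⟨u, hu, hsq⟩ : ∃ u:ℤ, 0 ≤ u ∧ (p:ℤ)^2 = 2*(2*u+2*(t:ℤ))+1 :=
    ⟨(t:ℤ)*(t:ℤ), mul_self_nonneg _, by rw [hpz]; ring⟩
  have htn : 0 ≤ (t:ℤ) := Int.natCast_nonneg t
  generalize hP : (p:ℤ)^2 = P at hsq ⊢
  omega

private lemma zmod_pow_cast_zero (p : ℕ) : (((p:ℤ)^2 : ℤ) : ZMod (p^2)) = 0 := by
  have h := ZMod.natCast_self (p^2)
  push_cast at h ⊢
  exact h

private lemma g_symm (p : ℕ) [NeZero p] (hodd : Odd p) {g : ZMod (p^2) → ℕ}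
    (hg : Good p g) : ∀ z : ZMod (p^2), g (-z) = g z := by
  haveI : NeZero (p^2) := ⟨pow_ne_zero 2 (NeZero.ne p)⟩
  intro z
  set r : ℤ := z.valMinAbs with hr
  have hrz : ((r : ℤ) : ZMod (p^2)) = z := ZMod.coe_valMinAbs z
  have hrb : |r| ≤ ((p:ℤ)^2-1)/2 := by
    have h1 := ZMod.natAbs_valMinAbs_le z
    have h2 : (r.natAbs : ℤ) = |r| := Int.natCast_natAbs r
    have hodd2 : (p^2) % 2 = 1 := Nat.odd_iff.mp (hodd.pow)
    obtain ⟨n, hn⟩ : ∃ n, p^2 = n := ⟨_, rfl⟩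
    have hcast : ((p:ℤ)^2) = ((n:ℕ) : ℤ) := by rw [← hn]; push_cast; ring
    rw [hcast]
    have h1' : r.natAbs ≤ n / 2 := by rw [← hn]; exact h1
    have hodd2' : n % 2 = 1 := by rw [← hn]; exact hodd2
    omega
  have hneg : ((-r : ℤ) : ZMod (p^2)) = -z := by rw [Int.cast_neg, hrz]
  have h1 : g (((-r : ℤ) : ZMod (p^2))) ≤ g ((r : ZMod (p^2))) :=
    hg r (-r) (by rw [abs_neg]) (by rwa [abs_neg])
  have h2 : g ((r : ZMod (p^2))) ≤ g (((-r : ℤ) : ZMod (p^2))) :=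
    hg (-r) r (by rw [abs_neg]) hrb
  rw [← hneg, ← hrz]
  omega

private lemma step_good (p : ℕ) [NeZero p] (hodd : Odd p) {g : ZMod (p^2) → ℕ}
    (hg : Good p g) : Good p (fun z => ∑ j ∈ digs p, g (z - (j : ZMod (p^2)))) := by
  classical
  obtain ⟨hl0, hl, hM2, hlM⟩ := odd_facts p hodd
  set l : ℤ := ((p:ℤ)-1)/2 with hldef
  set M : ℤ := ((p:ℤ)^2-1)/2 with hMdef
  set h : ZMod (p^2) → ℕ := fun z => ∑ j ∈ digs p, g (z - (j : ZMod (p^2))) with hh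
  -- h is symmetric
  have hsym : ∀ z : ZMod (p^2), h (-z) = h z := by
    intro z
    show ∑ j ∈ digs p, g (-z - (j:ZMod (p^2))) = ∑ j ∈ digs p, g (z - (j:ZMod (p^2)))
    refine Finset.sum_nbij' (i := fun j => -j) (j := fun j => -j) ?_ ?_ ?_ ?_ ?_
    · intro j hj; simp only [digs, Finset.mem_Icc] at *; omega
    · intro j hj; simp only [digs, Finset.mem_Icc] at *; omega
    · intro j _; ring
    · intro j _; ring
    · intro j _
      have e : (-z - (j:ZMod (p^2))) = -(z - ((-j : ℤ) : ZMod (p^2))) := by push_cast; ring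
      rw [e, g_symm p hodd hg]
  -- adjacent step
  have adj : ∀ x : ℤ, 0 ≤ x → x + 1 ≤ M → h (((x+1 : ℤ)) : ZMod (p^2)) ≤ h ((x : ZMod (p^2))) := by
    intro x hx0 hxM
    have e1 : digs p = insert l (Finset.Icc (-l) (l-1)) := by
      ext a; simp only [digs, Finset.mem_insert, Finset.mem_Icc]; omega
    have e2 : digs p = insert (-l) (Finset.Icc (-l+1) l) := by
      ext a; simp only [digs, Finset.mem_insert, Finset.mem_Icc]; omega
    have hnotin1 : l ∉ Finset.Icc (-l) (l-1) := by simp only [Finset.mem_Icc]; omega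
    have hnotin2 : -l ∉ Finset.Icc (-l+1) l := by simp only [Finset.mem_Icc]; omega
    have c1 : ((x : ℤ) : ZMod (p^2)) - ((l : ℤ) : ZMod (p^2)) = ((x - l : ℤ) : ZMod (p^2)) := by
      push_cast; ring
    have c2 : (((x+1 : ℤ)) : ZMod (p^2)) - (((-l : ℤ)) : ZMod (p^2)) = ((x + 1 + l : ℤ) : ZMod (p^2)) := by
      push_cast; ring
    have hx : h ((x : ZMod (p^2))) =
        g (((x - l : ℤ) : ZMod (p^2))) +
          ∑ j ∈ Finset.Icc (-l) (l-1), g (((x : ℤ) : ZMod (p^2)) - (j:ZMod (p^2))) := by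
      show ∑ j ∈ digs p, _ = _
      rw [e1, Finset.sum_insert hnotin1, c1]
    have hreindex : ∑ j ∈ Finset.Icc (-l+1) l, g ((((x+1:ℤ)) : ZMod (p^2)) - (j:ZMod (p^2)))
        = ∑ j ∈ Finset.Icc (-l) (l-1), g (((x : ℤ) : ZMod (p^2)) - (j:ZMod (p^2))) := by
      refine Finset.sum_nbij' (i := fun j => j - 1) (j := fun j => j + 1) ?_ ?_ ?_ ?_ ?_
      · intro j hj; simp only [Finset.mem_Icc] at *; omega
      · intro j hj; simp only [Finset.mem_Icc] at *; omega
      · intro j _; ring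
      · intro j _; ring
      · intro j _; congr 1; push_cast; ring
    have hx1 : h (((x+1 : ℤ) : ZMod (p^2))) =
        g (((x + 1 + l : ℤ) : ZMod (p^2))) +
          ∑ j ∈ Finset.Icc (-l) (l-1), g (((x : ℤ) : ZMod (p^2)) - (j:ZMod (p^2))) := by
      show ∑ j ∈ digs p, _ = _
      rw [e2, Finset.sum_insert hnotin2, c2, hreindex]
    rw [hx, hx1]
    have key : g (((x + 1 + l : ℤ) : ZMod (p^2))) ≤ g (((x - l : ℤ) : ZMod (p^2))) := by
      by_cases hc : x + 1 + l ≤ M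
      · refine hg (x - l) (x + 1 + l) ?_ (by rw [abs_of_nonneg (by omega)]; exact hc)
        have hb : |(x+1+l : ℤ)| = x+1+l := abs_of_nonneg (by omega)
        rw [hb, abs_le]; omega
      · obtain ⟨P, hP⟩ : ∃ P:ℤ, (p:ℤ)^2 = P := ⟨_, rfl⟩
        have hMP : 2 * M + 1 = P := by rw [← hP]; exact hM2
        set Y : ℤ := x + 1 + l - P with hY
        have hzero : ((P : ℤ) : ZMod (p^2)) = 0 := by rw [← hP]; exact zmod_pow_cast_zero p
        have hcast : ((Y : ℤ) : ZMod (p^2)) = ((x + 1 + l : ℤ) : ZMod (p^2)) := by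
          have : ((Y : ℤ) : ZMod (p^2)) = ((x + 1 + l : ℤ) : ZMod (p^2)) - ((P : ℤ) : ZMod (p^2)) := by
            rw [hY]; push_cast; ring
          rw [this, hzero, sub_zero]
        rw [← hcast]
        have hYneg : Y < 0 := by omega
        refine hg (x - l) Y ?_ ?_
        · rw [abs_of_neg hYneg, abs_le]; omega
        · rw [abs_of_neg hYneg]; omega
    omega
  -- chain
  have chain : ∀ b : ℕ, (b:ℤ) ≤ M → ∀ a : ℕ, a ≤ b →
      h (((b:ℤ) : ZMod (p^2))) ≤ h (((a:ℤ) : ZMod (p^2))) := by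
    intro b
    induction b with
    | zero =>
      intro _ a ha
      have : a = 0 := by omega
      subst this; exact le_refl _
    | succ n ih =>
      intro hb a ha
      rcases Nat.eq_or_lt_of_le ha with rfl | hlt
      · exact le_refl _
      · have hb' : ((n:ℤ)) + 1 ≤ M := by push_cast at hb ⊢; omega
        have h1 : h ((((n:ℤ)+1 : ℤ)) : ZMod (p^2)) ≤ h (((n:ℤ) : ZMod (p^2))) :=
          adj n (by positivity) hb'
        have h2 := ih (by omega) a (by omega)
        have hc : (((n+1 : ℕ) : ℤ)) = ((n:ℤ)+1) := by push_cast; ring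
        rw [hc]
        exact le_trans h1 h2
  -- conclude
  intro x y hxy hyM
  have habs : ∀ u : ℤ, h ((u : ZMod (p^2))) = h (((|u| : ℤ) : ZMod (p^2))) := by
    intro u
    rcases abs_choice u with hu | hu
    · rw [hu]
    · rw [hu]
      have : (((-u : ℤ)) : ZMod (p^2)) = -((u : ZMod (p^2))) := by push_cast; ring
      rw [this, hsym]
  have hxM : |x| ≤ M := le_trans hxy hyM
  have h1 := chain (|y|.toNat) (by rwa [Int.toNat_of_nonneg (abs_nonneg y)]) (|x|.toNat)
    (by omega)
  rw [Int.toNat_of_nonneg (abs_nonneg y), Int.toNat_of_nonneg (abs_nonneg x)] at h1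
  calc h ((y : ZMod (p^2))) = h (((|y| : ℤ) : ZMod (p^2))) := habs y
  _ ≤ h (((|x| : ℤ) : ZMod (p^2))) := h1
  _ = h ((x : ZMod (p^2))) := (habs x).symm

private noncomputable def cnt (p k : ℕ) (z : ZMod (p^2)) : ℕ :=
  ((Fintype.piFinset (fun _ : Fin k => (digs p).image (fun i : ℤ => (i : ZMod (p ^ 2))))).filter
    (fun f => ∑ i, f i = z)).card

private lemma cast_injOn (p : ℕ) (hp1 : 1 ≤ p) :
    Set.InjOn (fun i : ℤ => (i : ZMod (p ^ 2))) (digs p) := by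
  intro i hi j hj hij
  simp only [digs, Finset.coe_Icc, Set.mem_Icc] at hi hj
  have h0 : ((i - j : ℤ) : ZMod (p^2)) = 0 := by push_cast; simp_all
  rw [ZMod.intCast_zmod_eq_zero_iff_dvd] at h0
  have hb : ((p:ℤ)^2) ∣ (i - j) := by exact_mod_cast h0
  have hle : 1 ≤ (p:ℤ) := by exact_mod_cast hp1
  have : |i - j| < (p:ℤ)^2 := by
    have : (p:ℤ) - 1 < (p:ℤ)^2 := by nlinarith
    rw [abs_lt]; omega
  have := Int.eq_zero_of_abs_lt_dvd hb this
  omega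

private lemma cnt_succ (p : ℕ) (hp1 : 1 ≤ p) (k : ℕ) (z : ZMod (p^2)) :
    cnt p (k+1) z = ∑ j ∈ digs p, cnt p k (z - (j : ZMod (p^2))) := by
  classical
  set A : Finset (ZMod (p^2)) := (digs p).image (fun i : ℤ => (i : ZMod (p ^ 2))) with hA
  have step1 : cnt p (k+1) z = ∑ a ∈ A, cnt p k (z - a) := by
    unfold cnt
    rw [← Finset.card_sigma]
    refine Finset.card_bij' (i := fun f _ => (⟨f 0, Fin.tail f⟩ :
        Σ _ : ZMod (p^2), Fin k → ZMod (p^2)))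
      (j := fun q _ => Fin.cons q.1 q.2) ?_ ?_ ?_ ?_
    · intro f hf
      rw [Finset.mem_filter, Fintype.mem_piFinset] at hf
      rw [Finset.mem_sigma, Finset.mem_filter, Fintype.mem_piFinset]
      refine ⟨hf.1 0, fun i => hf.1 i.succ, ?_⟩
      have h2 := hf.2
      rw [Fin.sum_univ_succ] at h2
      simp only [Fin.tail]
      rw [eq_sub_iff_add_eq, add_comm]
      exact h2
    · rintro ⟨a, g⟩ hq
      rw [Finset.mem_sigma, Finset.mem_filter, Fintype.mem_piFinset] at hq
      rw [Finset.mem_filter, Fintype.mem_piFinset]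
      constructor
      · intro i
        refine Fin.cases ?_ ?_ i
        · simpa [hA, Finset.mem_image] using hq.1
        · intro j; simpa using hq.2.1 j
      · rw [Fin.sum_univ_succ]
        simp only [Fin.cons_zero, Fin.cons_succ]
        rw [hq.2.2]; ring
    · intro f _; exact Fin.cons_self_tail f
    · rintro ⟨a, g⟩ _
      simp [Fin.tail_cons]
  rw [step1, hA, Finset.sum_image]
  intro i hi j hj hij
  exact cast_injOn p hp1 (by simpa using hi) (by simpa using hj) hij


private lemma cnt_zero (p : ℕ) (z : ZMod (p^2)) : cnt p 0 z = if z = 0 then 1 else 0 := by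
  classical
  unfold cnt
  simp [Finset.filter_const, eq_comm]
  split_ifs <;> simp

private lemma cnt_zero_good (p : ℕ) [NeZero p] (hodd : Odd p) : Good p (cnt p 0) := by
  intro x y hxy hyM
  obtain ⟨-, -, hM2, -⟩ := odd_facts p hodd
  by_cases hz : ((y : ℤ) : ZMod (p^2)) = 0
  · have hdvd : ((p^2 : ℕ) : ℤ) ∣ y := (ZMod.intCast_zmod_eq_zero_iff_dvd y (p^2)).1 hz
    have hdvd' : ((p:ℤ)^2) ∣ y := by
      have : ((p^2 : ℕ) : ℤ) = (p:ℤ)^2 := by push_cast; ring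
      rwa [this] at hdvd
    obtain ⟨P, hP⟩ : ∃ P:ℤ, (p:ℤ)^2 = P := ⟨_, rfl⟩
    rw [hP] at hM2 hdvd'
    have hyM' : |y| ≤ (P - 1) / 2 := by rw [← hP]; exact hyM
    have hynn : 0 ≤ |y| := abs_nonneg y
    have hy0 : y = 0 := Int.eq_zero_of_abs_lt_dvd hdvd' (by omega)
    have hx0 : x = 0 := by
      subst hy0; simp only [abs_zero] at hxy
      exact abs_eq_zero.1 (le_antisymm hxy (abs_nonneg x))
    subst hy0; subst hx0; exact le_refl _
  · rw [cnt_zero, if_neg (by simpa [eq_comm] using hz)]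
    exact Nat.zero_le _

private lemma cnt_good (p : ℕ) [NeZero p] (hodd : Odd p) (k : ℕ) : Good p (cnt p k) := by
  have hp1 : 1 ≤ p := Nat.one_le_iff_ne_zero.2 (NeZero.ne p)
  induction k with
  | zero => exact cnt_zero_good p hodd
  | succ n ih =>
    intro x y hxy hyM
    rw [cnt_succ p hp1, cnt_succ p hp1]
    exact step_good p hodd ih x y hxy hyM

theorem balanced_rep_count_monotone (p : ℕ) [NeZero p] (hp : p.Prime) (hodd : Odd p)
    (k : ℕ) (hk : 1 ≤ k)
    (A' : Finset (ZMod (p ^ 2)))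
    (hA' : A' = (Finset.Icc (-(((p : ℤ) - 1) / 2)) (((p : ℤ) - 1) / 2)).image
      (fun i : ℤ => (i : ZMod (p ^ 2))))
    (n' : ZMod (p ^ 2) → ℕ)
    (hn' : ∀ z, n' z = ((Fintype.piFinset (fun _ : Fin k => A')).filter
      (fun f => ∑ i, f i = z)).card)
    (x y : ℤ) (hxy : |x| ≤ |y|) (hy : |y| ≤ ((p : ℤ) ^ 2 - 1) / 2) :
    n' ((y : ZMod (p ^ 2))) ≤ n' ((x : ZMod (p ^ 2))) := by
  have hne : ∀ z, n' z = cnt p k z := by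
    intro z
    rw [hn', hA']
    rfl
  rw [hne, hne]
  exact cnt_good p hodd k x y hxy hy
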